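/- Let N be an n-bit binary counter with instruction set I. Each of the regular languages L_reset = ι_sync ((ι_{=0} | ι_dec) ι_rotr ι_off)* (ι_{=0} | ι_dec) ι_rotr ι_sync, L_inc = ι_sync (ι_dec ι_rotr ι_off)* ι_inc (ι_off ι_rotr)* ι_sync, and L_dec = ι_sync (ι_inc ι_rotr ι_off)* ι_dec (ι_off ι_rotr)* ι_sync over I is deterministic on every valid configuration R of N; that is, for all u₁, u₂ in the language with |R·u₁| = |R| = |R·u₂|, one has u₁ = u₂. -/

import Mathlib

/-- Partial transformations on `Q` (partial functions `Q → Q`), with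
left-to-right composition: `q·(fg) = (q·f)·g`. -/
def PTrans (Q : Type*) : Type _ := Q → Option Q

/-- The image `R·f` of a configuration `R` under a partial transformation `f`. -/
def pApply {Q : Type*} (R : Set Q) (f : PTrans Q) : Set Q :=
  {q' | ∃ q ∈ R, f q = some q'}

/-- The image `R·u` of a configuration under a word of partial transformations. -/
def wordApply {Q : Type*} (R : Set Q) (u : List (PTrans Q)) : Set Q :=
  u.foldl pApply R

/-! ### The `n`-bit binary counter
Cells: `(0, i) = dᵢ` (tape `S`), `(1, i) = cᵢ` (tape `T`), `(2, i) = c̄ᵢ`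
(tape `T̄`). -/

variable (n : ℕ) [NeZero n]

/-- The cell `dᵢ` of the tape `S`. -/
def dCell (i : Fin n) : Fin 3 × Fin n := (0, i)

/-- The cell `cᵢ` of the tape `T`. -/
def cCell (i : Fin n) : Fin 3 × Fin n := (1, i)

/-- The cell `c̄ᵢ` of the tape `T̄`. -/
def cbarCell (i : Fin n) : Fin 3 × Fin n := (2, i)

/-- `ι_rotl` : cyclic left rotation on all three tapes. -/
def rotl : PTrans (Fin 3 × Fin n) := fun x => some (x.1, x.2 + 1)

/-- `ι_rotr` : cyclic right rotation on all three tapes. -/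
def rotr : PTrans (Fin 3 × Fin n) := fun x => some (x.1, x.2 - 1)

/-- `ι_{=0}` : undefined on `c₀`, identity on all other cells. -/
def eqz : PTrans (Fin 3 × Fin n) := fun x => if x = cCell n 0 then none else some x

/-- `ι_{=1}` : undefined on `c̄₀`, identity on all other cells. -/
def eqo : PTrans (Fin 3 × Fin n) := fun x => if x = cbarCell n 0 then none else some x

/-- `ι_sync` : undefined on `d₁, …, d_{n-1}`, identity on all other cells. -/
def syncI : PTrans (Fin 3 × Fin n) :=
  fun x => if x.1 = 0 ∧ x.2 ≠ 0 then none else some x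

/-- `ι_off` : undefined on `d₀`, identity on all other cells. -/
def offI : PTrans (Fin 3 × Fin n) := fun x => if x = dCell n 0 then none else some x

/-- `ι_inc` : maps `c̄₀` to `c₀`, undefined on `c₀`, identity elsewhere. -/
def incI : PTrans (Fin 3 × Fin n) :=
  fun x => if x = cbarCell n 0 then some (cCell n 0)
    else if x = cCell n 0 then none else some x

/-- `ι_dec` : maps `c₀` to `c̄₀`, undefined on `c̄₀`, identity elsewhere. -/
def decI : PTrans (Fin 3 × Fin n) :=
  fun x => if x = cCell n 0 then some (cbarCell n 0)
    else if x = cbarCell n 0 then none else some x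

/-- The instruction set of the `n`-bit binary counter. -/
def counterI : Set (PTrans (Fin 3 × Fin n)) :=
  {rotl n, rotr n, eqz n, eqo n, syncI n, offI n, incI n, decI n}

/-- A configuration is valid if it contains exactly one cell of the tape `S` and,
for each `i`, exactly one of `cᵢ`, `c̄ᵢ`. -/
def ValidConf (R : Set (Fin 3 × Fin n)) : Prop :=
  (∃! i : Fin n, dCell n i ∈ R) ∧ ∀ i : Fin n, (cCell n i ∈ R ↔ cbarCell n i ∉ R)

open Classical in
/-- The value of the counter under a configuration `R`: `Σ_{i : cᵢ ∈ R} 2^i`. -/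
noncomputable def counterValue (R : Set (Fin 3 × Fin n)) : ℕ :=
  ∑ i : Fin n, if cCell n i ∈ R then 2 ^ (i : ℕ) else 0

/-- Membership in the regular language
`L_reset = ι_sync ((ι_{=0} | ι_dec) ι_rotr ι_off)* (ι_{=0} | ι_dec) ι_rotr ι_sync`. -/
def memLreset (u : List (PTrans (Fin 3 × Fin n))) : Prop :=
  ∃ (bs : List (PTrans (Fin 3 × Fin n))) (b : PTrans (Fin 3 × Fin n)),
    (∀ x ∈ bs, x = eqz n ∨ x = decI n) ∧ (b = eqz n ∨ b = decI n) ∧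
    u = syncI n ::
      ((bs.map fun x => [x, rotr n, offI n]).flatten ++ [b, rotr n, syncI n])

/-- Membership in the regular language
`L_inc = ι_sync (ι_dec ι_rotr ι_off)* ι_inc (ι_off ι_rotr)* ι_sync`. -/
def memLinc (u : List (PTrans (Fin 3 × Fin n))) : Prop :=
  ∃ k m : ℕ,
    u = syncI n ::
      ((List.replicate k [decI n, rotr n, offI n]).flatten ++
        incI n :: ((List.replicate m [offI n, rotr n]).flatten ++ [syncI n]))

/-- Membership in the regular language
`L_dec = ι_sync (ι_inc ι_rotr ι_off)* ι_dec (ι_off ι_rotr)* ι_sync`. -/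
def memLdec (u : List (PTrans (Fin 3 × Fin n))) : Prop :=
  ∃ k m : ℕ,
    u = syncI n ::
      ((List.replicate k [incI n, rotr n, offI n]).flatten ++
        decI n :: ((List.replicate m [offI n, rotr n]).flatten ++ [syncI n]))

section Auxx
variable {Q : Type*} [Finite Q]

lemma pApply_ncard_le (R : Set Q) (f : PTrans Q) : (pApply R f).ncard ≤ R.ncard := by
  classical
  apply Set.ncard_le_ncard_of_injOn
    (fun q' => if h : ∃ q ∈ R, f q = some q' then h.choose else q')
  · intro a ha
    have ha' : ∃ q ∈ R, f q = some a := ha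
    show (if h : ∃ q ∈ R, f q = some a then h.choose else a) ∈ R
    rw [dif_pos ha']
    exact ha'.choose_spec.1
  · intro a ha b hb hab
    have ha' : ∃ q ∈ R, f q = some a := ha
    have hb' : ∃ q ∈ R, f q = some b := hb
    simp only [dif_pos ha', dif_pos hb'] at hab
    have h1 := ha'.choose_spec.2
    have h2 := hb'.choose_spec.2
    rw [hab, h2] at h1
    exact (Option.some_inj.mp h1).symm

lemma wordApply_ncard_le (R : Set Q) (u : List (PTrans Q)) :
    (wordApply R u).ncard ≤ R.ncard := by
  induction u generalizing R with
  | nil => exact le_rfl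
  | cons f u ih => exact (ih (pApply R f)).trans (pApply_ncard_le R f)

omit [Finite Q] in
lemma wordApply_cons (R : Set Q) (f : PTrans Q) (u : List (PTrans Q)) :
    wordApply R (f :: u) = wordApply (pApply R f) u := rfl

end Auxx


/-- The valid configuration with `d`-cell at `p` and bit vector `b`. -/
def conf (p : Fin n) (b : Fin n → Bool) : Set (Fin 3 × Fin n) :=
  {x | (x.1 = 0 ∧ x.2 = p) ∨ (x.1 = 1 ∧ b x.2 = true) ∨ (x.1 = 2 ∧ b x.2 = false)}

variable {n}

set_option linter.unusedSectionVars false in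
lemma mem_conf {p : Fin n} {b : Fin n → Bool} {x : Fin 3 × Fin n} :
    x ∈ conf n p b ↔
      (x.1 = 0 ∧ x.2 = p) ∨ (x.1 = 1 ∧ b x.2 = true) ∨ (x.1 = 2 ∧ b x.2 = false) :=
  Iff.rfl

lemma conf_ncard (p : Fin n) (b : Fin n → Bool) : (conf n p b).ncard = n + 1 := by
  have h1 : conf n p b =
      insert ((0 : Fin 3), p) ((fun i : Fin n => ((if b i then 1 else 2 : Fin 3), i)) '' Set.univ) := by
    ext ⟨t, j⟩
    simp only [mem_conf, Set.mem_insert_iff, Set.mem_image, Set.mem_univ, true_and,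
      Prod.mk.injEq]
    constructor
    · rintro (⟨h1, h2⟩ | ⟨h1, h2⟩ | ⟨h1, h2⟩)
      · exact Or.inl (by simp [h1, h2])
      · exact Or.inr ⟨j, by simp [h1, h2]⟩
      · exact Or.inr ⟨j, by simp [h1, h2]⟩
    · rintro (⟨h1, h2⟩ | ⟨i, hi, rfl⟩)
      · exact Or.inl ⟨h1, h2⟩
      · cases hb : b i <;> simp [hb] at hi ⊢ <;> exact Or.inr hi.symm
  rw [h1, Set.ncard_insert_of_notMem, Set.ncard_image_of_injective _ ?inj, Set.ncard_univ,
    Nat.card_eq_fintype_card, Fintype.card_fin]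
  case inj =>
    intro i j hij
    exact (Prod.mk.injEq _ _ _ _ ▸ hij).2
  · rintro ⟨i, -, hi⟩
    rw [Prod.mk.injEq] at hi
    cases hb : b i <;> rw [hb] at hi <;> exact absurd hi.1 (by decide)

lemma ite_none_some {Q : Type*} {P : Prop} [Decidable P] {a q : Q} :
    (if P then none else some a) = some q ↔ ¬P ∧ a = q := by
  split <;> simp_all

lemma pApply_syncI_zero (b : Fin n → Bool) :
    pApply (conf n 0 b) (syncI n) = conf n 0 b := by
  ext ⟨t, j⟩
  simp only [pApply, syncI, Set.mem_setOf_eq, ite_none_some]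
  constructor
  · rintro ⟨q, hq, -, rfl⟩
    exact hq
  · intro h
    refine ⟨(t, j), h, ?_, rfl⟩
    rintro ⟨rfl, hj⟩
    rcases mem_conf.mp h with ⟨-, rfl⟩ | ⟨h1, -⟩ | ⟨h1, -⟩
    · exact hj rfl
    · exact absurd h1 (by simp)
    · exact absurd h1 (by simp)

lemma pApply_rotr (p : Fin n) (b : Fin n → Bool) :
    pApply (conf n p b) (rotr n) = conf n (p - 1) (fun i => b (i + 1)) := by
  ext ⟨t, j⟩
  simp only [pApply, rotr, Set.mem_setOf_eq, Option.some_inj]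
  constructor
  · rintro ⟨⟨s, i⟩, hq, hs⟩
    rw [Prod.mk.injEq] at hs
    obtain ⟨rfl, rfl⟩ := hs
    rcases mem_conf.mp hq with ⟨h1, rfl⟩ | ⟨h1, h2⟩ | ⟨h1, h2⟩
    · exact mem_conf.mpr (Or.inl ⟨h1, rfl⟩)
    · exact mem_conf.mpr (Or.inr (Or.inl ⟨h1, by simpa using h2⟩))
    · exact mem_conf.mpr (Or.inr (Or.inr ⟨h1, by simpa using h2⟩))
  · intro h
    refine ⟨(t, j + 1), ?_, by simp⟩
    rcases mem_conf.mp h with ⟨h1, h2⟩ | ⟨h1, h2⟩ | ⟨h1, h2⟩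
    · refine mem_conf.mpr (Or.inl ⟨h1, ?_⟩)
      show j + 1 = p
      have hj : j = p - 1 := h2
      rw [hj]; exact sub_add_cancel p 1
    · exact mem_conf.mpr (Or.inr (Or.inl ⟨h1, h2⟩))
    · exact mem_conf.mpr (Or.inr (Or.inr ⟨h1, h2⟩))

lemma pApply_offI (p : Fin n) (b : Fin n → Bool) (hp : p ≠ 0) :
    pApply (conf n p b) (offI n) = conf n p b := by
  ext ⟨t, j⟩
  simp only [pApply, offI, Set.mem_setOf_eq, ite_none_some]
  constructor
  · rintro ⟨q, hq, -, rfl⟩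
    exact hq
  · intro h
    refine ⟨(t, j), h, ?_, rfl⟩
    intro he
    rw [dCell, Prod.mk.injEq] at he
    rcases mem_conf.mp h with ⟨-, rfl⟩ | ⟨h1, -⟩ | ⟨h1, -⟩
    · exact hp he.2
    · exact absurd (he.1 ▸ h1) (by simp)
    · exact absurd (he.1 ▸ h1) (by simp)

lemma pApply_eqz (p : Fin n) (b : Fin n → Bool) (hb : b 0 = false) :
    pApply (conf n p b) (eqz n) = conf n p b := by
  ext ⟨t, j⟩
  simp only [pApply, eqz, Set.mem_setOf_eq, ite_none_some]
  constructor
  · rintro ⟨q, hq, -, rfl⟩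
    exact hq
  · intro h
    refine ⟨(t, j), h, ?_, rfl⟩
    intro he
    rw [cCell, Prod.mk.injEq] at he
    rcases mem_conf.mp h with ⟨h1, -⟩ | ⟨-, h2⟩ | ⟨h1, -⟩
    · exact absurd (he.1 ▸ h1) (by simp)
    · rw [show j = 0 from he.2] at h2
      rw [hb] at h2; exact absurd h2 (by simp)
    · exact absurd (he.1 ▸ h1) (by simp)

lemma incI_eq_some {q q' : Fin 3 × Fin n} :
    incI n q = some q' ↔
      (q = ((2 : Fin 3), (0 : Fin n)) ∧ q' = ((1 : Fin 3), (0 : Fin n))) ∨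
      (q ≠ ((2 : Fin 3), (0 : Fin n)) ∧ q ≠ ((1 : Fin 3), (0 : Fin n)) ∧ q' = q) := by
  unfold incI cCell cbarCell
  split
  · simp_all [eq_comm]
  · split <;> simp_all [eq_comm]

lemma decI_eq_some {q q' : Fin 3 × Fin n} :
    decI n q = some q' ↔
      (q = ((1 : Fin 3), (0 : Fin n)) ∧ q' = ((2 : Fin 3), (0 : Fin n))) ∨
      (q ≠ ((1 : Fin 3), (0 : Fin n)) ∧ q ≠ ((2 : Fin 3), (0 : Fin n)) ∧ q' = q) := by
  unfold decI cCell cbarCell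
  split
  · simp_all [eq_comm]
  · split <;> simp_all [eq_comm]

lemma pApply_incI (p : Fin n) (b : Fin n → Bool) (hb : b 0 = false) :
    pApply (conf n p b) (incI n) = conf n p (Function.update b 0 true) := by
  ext ⟨t, j⟩
  simp only [pApply, Set.mem_setOf_eq, incI_eq_some]
  constructor
  · rintro ⟨q, hq, (⟨rfl, he⟩ | ⟨h2, h1, rfl⟩)⟩
    · rw [Prod.mk.injEq] at he
      obtain ⟨rfl, rfl⟩ := he
      exact mem_conf.mpr (Or.inr (Or.inl ⟨rfl, by simp⟩))
    · rcases mem_conf.mp hq with ⟨ht, hj⟩ | ⟨ht, hc⟩ | ⟨ht, hc⟩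
      · exact mem_conf.mpr (Or.inl ⟨ht, hj⟩)
      · have hj0 : j ≠ 0 := by
          rintro rfl
          rw [hc] at hb; exact absurd hb (by simp)
        exact mem_conf.mpr (Or.inr (Or.inl ⟨ht, by
          show Function.update b 0 true j = true
          rw [Function.update_of_ne hj0]; exact hc⟩))
      · have hj0 : j ≠ 0 := by
          rintro rfl
          exact h2 (by rw [Prod.mk.injEq]; exact ⟨ht, rfl⟩)
        exact mem_conf.mpr (Or.inr (Or.inr ⟨ht, by
          show Function.update b 0 true j = false
          rw [Function.update_of_ne hj0]; exact hc⟩))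
  · intro h
    rcases mem_conf.mp h with ⟨ht, hj⟩ | ⟨ht, hc⟩ | ⟨ht, hc⟩
    · refine ⟨(t, j), mem_conf.mpr (Or.inl ⟨ht, hj⟩), Or.inr ⟨?_, ?_, rfl⟩⟩
      · exact fun h' => by have := ht.symm.trans (congrArg Prod.fst h'); simp at this
      · exact fun h' => by have := ht.symm.trans (congrArg Prod.fst h'); simp at this
    · by_cases hj0 : j = 0
      · refine ⟨((2 : Fin 3), (0 : Fin n)), mem_conf.mpr (Or.inr (Or.inr ⟨rfl, hb⟩)),
          Or.inl ⟨rfl, ?_⟩⟩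
        rw [Prod.mk.injEq]; exact ⟨ht, hj0⟩
      · have hbj : b j = true := by
          have := hc; rwa [show Function.update b 0 true j = b j from
            Function.update_of_ne hj0 _ _] at this
        refine ⟨(t, j), mem_conf.mpr (Or.inr (Or.inl ⟨ht, hbj⟩)), Or.inr ⟨?_, ?_, rfl⟩⟩
        · exact fun h' => by have := ht.symm.trans (congrArg Prod.fst h'); simp at this
        · simp [Prod.ext_iff, hj0]
    · have hj0 : j ≠ 0 := by
        rintro rfl
        rw [show Function.update b 0 true 0 = true from Function.update_self _ _ _] at hc
        exact absurd hc (by simp)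
      have hbj : b j = false := by
        have := hc; rwa [show Function.update b 0 true j = b j from
          Function.update_of_ne hj0 _ _] at this
      refine ⟨(t, j), mem_conf.mpr (Or.inr (Or.inr ⟨ht, hbj⟩)), Or.inr ⟨?_, ?_, rfl⟩⟩
      · simp [Prod.ext_iff, hj0]
      · exact fun h' => by have := ht.symm.trans (congrArg Prod.fst h'); simp at this

lemma pApply_decI (p : Fin n) (b : Fin n → Bool) (hb : b 0 = true) :
    pApply (conf n p b) (decI n) = conf n p (Function.update b 0 false) := by
  ext ⟨t, j⟩
  simp only [pApply, Set.mem_setOf_eq, decI_eq_some]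
  constructor
  · rintro ⟨q, hq, (⟨rfl, he⟩ | ⟨h2, h1, rfl⟩)⟩
    · rw [Prod.mk.injEq] at he
      obtain ⟨rfl, rfl⟩ := he
      exact mem_conf.mpr (Or.inr (Or.inr ⟨rfl, by simp⟩))
    · rcases mem_conf.mp hq with ⟨ht, hj⟩ | ⟨ht, hc⟩ | ⟨ht, hc⟩
      · exact mem_conf.mpr (Or.inl ⟨ht, hj⟩)
      · have hj0 : j ≠ 0 := by
          rintro rfl
          exact h2 (by rw [Prod.mk.injEq]; exact ⟨ht, rfl⟩)
        exact mem_conf.mpr (Or.inr (Or.inl ⟨ht, by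
          show Function.update b 0 false j = true
          rw [Function.update_of_ne hj0]; exact hc⟩))
      · have hj0 : j ≠ 0 := by
          rintro rfl
          rw [hc] at hb; exact absurd hb (by simp)
        exact mem_conf.mpr (Or.inr (Or.inr ⟨ht, by
          show Function.update b 0 false j = false
          rw [Function.update_of_ne hj0]; exact hc⟩))
  · intro h
    rcases mem_conf.mp h with ⟨ht, hj⟩ | ⟨ht, hc⟩ | ⟨ht, hc⟩
    · refine ⟨(t, j), mem_conf.mpr (Or.inl ⟨ht, hj⟩), Or.inr ⟨?_, ?_, rfl⟩⟩
      · exact fun h' => by have := ht.symm.trans (congrArg Prod.fst h'); simp at this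
      · exact fun h' => by have := ht.symm.trans (congrArg Prod.fst h'); simp at this
    · have hj0 : j ≠ 0 := by
        rintro rfl
        rw [show Function.update b 0 false 0 = false from Function.update_self _ _ _] at hc
        exact absurd hc (by simp)
      have hbj : b j = true := by
        have := hc; rwa [show Function.update b 0 false j = b j from
          Function.update_of_ne hj0 _ _] at this
      refine ⟨(t, j), mem_conf.mpr (Or.inr (Or.inl ⟨ht, hbj⟩)), Or.inr ⟨?_, ?_, rfl⟩⟩
      · simp [Prod.ext_iff, hj0]
      · exact fun h' => by have := ht.symm.trans (congrArg Prod.fst h'); simp at this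
    · by_cases hj0 : j = 0
      · refine ⟨((1 : Fin 3), (0 : Fin n)), mem_conf.mpr (Or.inr (Or.inl ⟨rfl, hb⟩)),
          Or.inl ⟨rfl, ?_⟩⟩
        rw [Prod.mk.injEq]; exact ⟨ht, hj0⟩
      · have hbj : b j = false := by
          have := hc; rwa [show Function.update b 0 false j = b j from
            Function.update_of_ne hj0 _ _] at this
        refine ⟨(t, j), mem_conf.mpr (Or.inr (Or.inr ⟨ht, hbj⟩)), Or.inr ⟨?_, ?_, rfl⟩⟩
        · exact fun h' => by have := ht.symm.trans (congrArg Prod.fst h'); simp at this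
        · simp [Prod.ext_iff, hj0]

lemma dead {p : Fin n} {b : Fin n → Bool} {z : Fin 3 × Fin n} {S : Set (Fin 3 × Fin n)}
    (hS : S ⊆ conf n p b \ {z}) (hz : z ∈ conf n p b) (u : List (PTrans (Fin 3 × Fin n))) :
    (wordApply S u).ncard ≤ n := by
  calc (wordApply S u).ncard ≤ S.ncard := wordApply_ncard_le _ _
    _ ≤ (conf n p b \ {z}).ncard := Set.ncard_le_ncard hS (Set.toFinite _)
    _ ≤ n := by
        rw [Set.ncard_diff_singleton_of_mem hz, conf_ncard]
        omega

lemma sync_bad {p : Fin n} {b : Fin n → Bool} (hp : p ≠ 0) :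
    pApply (conf n p b) (syncI n) ⊆ conf n p b \ {((0 : Fin 3), p)} := by
  rintro q' ⟨q, hq, hf⟩
  rw [syncI, ite_none_some] at hf
  obtain ⟨hc, rfl⟩ := hf
  refine ⟨hq, ?_⟩
  rintro rfl
  exact hc ⟨rfl, hp⟩

lemma off_bad {b : Fin n → Bool} :
    pApply (conf n 0 b) (offI n) ⊆ conf n 0 b \ {((0 : Fin 3), (0 : Fin n))} := by
  rintro q' ⟨q, hq, hf⟩
  rw [offI, ite_none_some] at hf
  obtain ⟨hc, rfl⟩ := hf
  exact ⟨hq, hc⟩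

lemma eqz_bad {p : Fin n} {b : Fin n → Bool} :
    pApply (conf n p b) (eqz n) ⊆ conf n p b \ {((1 : Fin 3), (0 : Fin n))} := by
  rintro q' ⟨q, hq, hf⟩
  rw [eqz, ite_none_some] at hf
  obtain ⟨hc, rfl⟩ := hf
  exact ⟨hq, hc⟩

lemma inc_bad {p : Fin n} {b : Fin n → Bool} (hb : b 0 = true) :
    pApply (conf n p b) (incI n) ⊆ conf n p b \ {((1 : Fin 3), (0 : Fin n))} := by
  rintro q' ⟨q, hq, hf⟩
  rw [incI_eq_some] at hf
  rcases hf with ⟨rfl, rfl⟩ | ⟨h2, h1, rfl⟩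
  · rcases mem_conf.mp hq with ⟨h', -⟩ | ⟨h', -⟩ | ⟨-, h'⟩
    · exact absurd h' (by simp)
    · exact absurd h' (by simp)
    · rw [hb] at h'; exact absurd h' (by simp)
  · exact ⟨hq, h1⟩

lemma dec_bad {p : Fin n} {b : Fin n → Bool} (hb : b 0 = false) :
    pApply (conf n p b) (decI n) ⊆ conf n p b \ {((2 : Fin 3), (0 : Fin n))} := by
  rintro q' ⟨q, hq, hf⟩
  rw [decI_eq_some] at hf
  rcases hf with ⟨rfl, rfl⟩ | ⟨h2, h1, rfl⟩
  · rcases mem_conf.mp hq with ⟨h', -⟩ | ⟨-, h'⟩ | ⟨h', -⟩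
    · exact absurd h' (by simp)
    · rw [hb] at h'; exact absurd h' (by simp)
    · exact absurd h' (by simp)
  · exact ⟨hq, h1⟩

section Succ
variable {p : Fin n} {b : Fin n → Bool} {u : List (PTrans (Fin 3 × Fin n))}

lemma succ_syncI (h : (wordApply (conf n p b) (syncI n :: u)).ncard = n + 1) :
    p = 0 ∧ (wordApply (conf n 0 b) u).ncard = n + 1 := by
  by_cases hp : p = 0
  · subst hp
    rw [wordApply_cons, pApply_syncI_zero] at h
    exact ⟨rfl, h⟩
  · have hd := dead (sync_bad (b := b) hp) (mem_conf.mpr (Or.inl ⟨rfl, rfl⟩)) u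
    rw [wordApply_cons] at h
    omega

lemma succ_offI (h : (wordApply (conf n p b) (offI n :: u)).ncard = n + 1) :
    p ≠ 0 ∧ (wordApply (conf n p b) u).ncard = n + 1 := by
  by_cases hp : p = 0
  · subst hp
    have hd := dead (off_bad (b := b)) (mem_conf.mpr (Or.inl ⟨rfl, rfl⟩)) u
    rw [wordApply_cons] at h
    omega
  · rw [wordApply_cons, pApply_offI p b hp] at h
    exact ⟨hp, h⟩

lemma succ_eqz (h : (wordApply (conf n p b) (eqz n :: u)).ncard = n + 1) :
    b 0 = false ∧ (wordApply (conf n p b) u).ncard = n + 1 := by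
  cases hb : b 0 with
  | false =>
    rw [wordApply_cons, pApply_eqz p b hb] at h
    exact ⟨rfl, h⟩
  | true =>
    have hd := dead (eqz_bad (p := p) (b := b)) (mem_conf.mpr (Or.inr (Or.inl ⟨rfl, hb⟩))) u
    rw [wordApply_cons] at h
    omega

lemma succ_incI (h : (wordApply (conf n p b) (incI n :: u)).ncard = n + 1) :
    b 0 = false ∧ (wordApply (conf n p (Function.update b 0 true)) u).ncard = n + 1 := by
  cases hb : b 0 with
  | false =>
    rw [wordApply_cons, pApply_incI p b hb] at h
    exact ⟨rfl, h⟩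
  | true =>
    have hd := dead (inc_bad (p := p) hb) (mem_conf.mpr (Or.inr (Or.inl ⟨rfl, hb⟩))) u
    rw [wordApply_cons] at h
    omega

lemma succ_decI (h : (wordApply (conf n p b) (decI n :: u)).ncard = n + 1) :
    b 0 = true ∧ (wordApply (conf n p (Function.update b 0 false)) u).ncard = n + 1 := by
  cases hb : b 0 with
  | true =>
    rw [wordApply_cons, pApply_decI p b hb] at h
    exact ⟨rfl, h⟩
  | false =>
    have hd := dead (dec_bad (p := p) hb) (mem_conf.mpr (Or.inr (Or.inr ⟨rfl, hb⟩))) u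
    rw [wordApply_cons] at h
    omega

lemma succ_rotr (h : (wordApply (conf n p b) (rotr n :: u)).ncard = n + 1) :
    (wordApply (conf n (p - 1) (fun i => b (i + 1))) u).ncard = n + 1 := by
  rw [wordApply_cons, pApply_rotr] at h
  exact h

end Succ

lemma offrot_unique : ∀ (m₁ m₂ : ℕ) (p : Fin n) (b : Fin n → Bool),
    (wordApply (conf n p b)
      ((List.replicate m₁ [offI n, rotr n]).flatten ++ [syncI n])).ncard = n + 1 →
    (wordApply (conf n p b)
      ((List.replicate m₂ [offI n, rotr n]).flatten ++ [syncI n])).ncard = n + 1 →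
    m₁ = m₂ := by
  intro m₁
  induction m₁ with
  | zero =>
    intro m₂ p b h1 h2
    simp only [List.replicate, List.flatten_nil, List.nil_append] at h1
    obtain ⟨hp, -⟩ := succ_syncI h1
    subst hp
    cases m₂ with
    | zero => rfl
    | succ m =>
      exfalso
      rw [List.replicate_succ] at h2
      simp only [List.flatten_cons, List.cons_append, List.append_assoc] at h2
      exact (succ_offI h2).1 rfl
  | succ m₁ ih =>
    intro m₂ p b h1 h2
    rw [List.replicate_succ] at h1
    simp only [List.flatten_cons, List.cons_append, List.append_assoc] at h1
    cases m₂ with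
    | zero =>
      exfalso
      simp only [List.replicate, List.flatten_nil, List.nil_append] at h2
      obtain ⟨hp, -⟩ := succ_syncI h2
      subst hp
      exact (succ_offI h1).1 rfl
    | succ m₂ =>
      rw [List.replicate_succ] at h2
      simp only [List.flatten_cons, List.cons_append, List.append_assoc] at h2
      obtain ⟨-, h1'⟩ := succ_offI h1
      obtain ⟨-, h2'⟩ := succ_offI h2
      exact congrArg Nat.succ (ih m₂ _ _ (succ_rotr h1') (succ_rotr h2'))

lemma incTail_unique : ∀ (k₁ m₁ k₂ m₂ : ℕ) (p : Fin n) (b : Fin n → Bool),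
    (wordApply (conf n p b)
      ((List.replicate k₁ [decI n, rotr n, offI n]).flatten ++
        incI n :: ((List.replicate m₁ [offI n, rotr n]).flatten ++ [syncI n]))).ncard = n + 1 →
    (wordApply (conf n p b)
      ((List.replicate k₂ [decI n, rotr n, offI n]).flatten ++
        incI n :: ((List.replicate m₂ [offI n, rotr n]).flatten ++ [syncI n]))).ncard = n + 1 →
    k₁ = k₂ ∧ m₁ = m₂ := by
  intro k₁
  induction k₁ with
  | zero =>
    intro m₁ k₂ m₂ p b h1 h2
    simp only [List.replicate, List.flatten_nil, List.nil_append] at h1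
    obtain ⟨hb1, h1'⟩ := succ_incI h1
    cases k₂ with
    | zero =>
      simp only [List.replicate, List.flatten_nil, List.nil_append] at h2
      obtain ⟨-, h2'⟩ := succ_incI h2
      exact ⟨rfl, offrot_unique m₁ m₂ _ _ h1' h2'⟩
    | succ k₂ =>
      exfalso
      rw [List.replicate_succ] at h2
      simp only [List.flatten_cons, List.cons_append, List.append_assoc] at h2
      obtain ⟨hb2, -⟩ := succ_decI h2
      rw [hb1] at hb2
      exact absurd hb2 (by simp)
  | succ k₁ ih =>
    intro m₁ k₂ m₂ p b h1 h2
    rw [List.replicate_succ] at h1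
    simp only [List.flatten_cons, List.cons_append, List.append_assoc] at h1
    obtain ⟨hb1, h1'⟩ := succ_decI h1
    cases k₂ with
    | zero =>
      exfalso
      simp only [List.replicate, List.flatten_nil, List.nil_append] at h2
      obtain ⟨hb2, -⟩ := succ_incI h2
      rw [hb1] at hb2
      exact absurd hb2 (by simp)
    | succ k₂ =>
      rw [List.replicate_succ] at h2
      simp only [List.flatten_cons, List.cons_append, List.append_assoc] at h2
      obtain ⟨-, h2'⟩ := succ_decI h2
      obtain ⟨-, h1''⟩ := succ_offI (succ_rotr h1')
      obtain ⟨-, h2''⟩ := succ_offI (succ_rotr h2')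
      obtain ⟨hk, hm⟩ := ih m₁ k₂ m₂ _ _ h1'' h2''
      exact ⟨congrArg Nat.succ hk, hm⟩

lemma decTail_unique : ∀ (k₁ m₁ k₂ m₂ : ℕ) (p : Fin n) (b : Fin n → Bool),
    (wordApply (conf n p b)
      ((List.replicate k₁ [incI n, rotr n, offI n]).flatten ++
        decI n :: ((List.replicate m₁ [offI n, rotr n]).flatten ++ [syncI n]))).ncard = n + 1 →
    (wordApply (conf n p b)
      ((List.replicate k₂ [incI n, rotr n, offI n]).flatten ++
        decI n :: ((List.replicate m₂ [offI n, rotr n]).flatten ++ [syncI n]))).ncard = n + 1 →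
    k₁ = k₂ ∧ m₁ = m₂ := by
  intro k₁
  induction k₁ with
  | zero =>
    intro m₁ k₂ m₂ p b h1 h2
    simp only [List.replicate, List.flatten_nil, List.nil_append] at h1
    obtain ⟨hb1, h1'⟩ := succ_decI h1
    cases k₂ with
    | zero =>
      simp only [List.replicate, List.flatten_nil, List.nil_append] at h2
      obtain ⟨-, h2'⟩ := succ_decI h2
      exact ⟨rfl, offrot_unique m₁ m₂ _ _ h1' h2'⟩
    | succ k₂ =>
      exfalso
      rw [List.replicate_succ] at h2
      simp only [List.flatten_cons, List.cons_append, List.append_assoc] at h2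
      obtain ⟨hb2, -⟩ := succ_incI h2
      rw [hb1] at hb2
      exact absurd hb2 (by simp)
  | succ k₁ ih =>
    intro m₁ k₂ m₂ p b h1 h2
    rw [List.replicate_succ] at h1
    simp only [List.flatten_cons, List.cons_append, List.append_assoc] at h1
    obtain ⟨hb1, h1'⟩ := succ_incI h1
    cases k₂ with
    | zero =>
      exfalso
      simp only [List.replicate, List.flatten_nil, List.nil_append] at h2
      obtain ⟨hb2, -⟩ := succ_decI h2
      rw [hb1] at hb2
      exact absurd hb2 (by simp)
    | succ k₂ =>
      rw [List.replicate_succ] at h2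
      simp only [List.flatten_cons, List.cons_append, List.append_assoc] at h2
      obtain ⟨-, h2'⟩ := succ_incI h2
      obtain ⟨-, h1''⟩ := succ_offI (succ_rotr h1')
      obtain ⟨-, h2''⟩ := succ_offI (succ_rotr h2')
      obtain ⟨hk, hm⟩ := ih m₁ k₂ m₂ _ _ h1'' h2''
      exact ⟨congrArg Nat.succ hk, hm⟩

lemma step_ed {e : PTrans (Fin 3 × Fin n)} (he : e = eqz n ∨ e = decI n)
    {p : Fin n} {b : Fin n → Bool} {u : List (PTrans (Fin 3 × Fin n))}
    (h : (wordApply (conf n p b) (e :: u)).ncard = n + 1) :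
    e = (if b 0 = true then decI n else eqz n) ∧
    (wordApply (conf n p (Function.update b 0 false)) u).ncard = n + 1 := by
  rcases he with rfl | rfl
  · obtain ⟨hb, h'⟩ := succ_eqz h
    have hupd : Function.update b 0 false = b := by
      funext i
      by_cases hi : i = 0
      · subst hi; simp [hb]
      · simp [Function.update_of_ne hi]
    rw [hupd]
    exact ⟨by rw [hb]; simp, h'⟩
  · obtain ⟨hb, h'⟩ := succ_decI h
    exact ⟨by rw [hb]; simp, h'⟩

lemma reset_unique : ∀ (bs₁ : List (PTrans (Fin 3 × Fin n)))
    (e₁ : PTrans (Fin 3 × Fin n)) (bs₂ : List (PTrans (Fin 3 × Fin n)))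
    (e₂ : PTrans (Fin 3 × Fin n)) (p : Fin n) (b : Fin n → Bool),
    (∀ x ∈ bs₁, x = eqz n ∨ x = decI n) → (e₁ = eqz n ∨ e₁ = decI n) →
    (∀ x ∈ bs₂, x = eqz n ∨ x = decI n) → (e₂ = eqz n ∨ e₂ = decI n) →
    (wordApply (conf n p b)
      ((bs₁.map fun x => [x, rotr n, offI n]).flatten ++ [e₁, rotr n, syncI n])).ncard = n + 1 →
    (wordApply (conf n p b)
      ((bs₂.map fun x => [x, rotr n, offI n]).flatten ++ [e₂, rotr n, syncI n])).ncard = n + 1 →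
    bs₁ = bs₂ ∧ e₁ = e₂ := by
  intro bs₁
  induction bs₁ with
  | nil =>
    intro e₁ bs₂ e₂ p b _ he₁ hbs₂ he₂ h1 h2
    simp only [List.map_nil, List.flatten_nil, List.nil_append] at h1
    obtain ⟨hc1, h1'⟩ := step_ed he₁ h1
    obtain ⟨hp, -⟩ := succ_syncI (succ_rotr h1')
    cases bs₂ with
    | nil =>
      simp only [List.map_nil, List.flatten_nil, List.nil_append] at h2
      obtain ⟨hc2, -⟩ := step_ed he₂ h2
      exact ⟨rfl, hc1.trans hc2.symm⟩
    | cons x r =>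
      exfalso
      simp only [List.map_cons, List.flatten_cons, List.cons_append, List.append_assoc] at h2
      obtain ⟨-, h2'⟩ := step_ed (hbs₂ x List.mem_cons_self) h2
      exact (succ_offI (succ_rotr h2')).1 hp
  | cons x₁ r₁ ih =>
    intro e₁ bs₂ e₂ p b hbs₁ he₁ hbs₂ he₂ h1 h2
    simp only [List.map_cons, List.flatten_cons, List.cons_append, List.append_assoc] at h1
    obtain ⟨hc1, h1'⟩ := step_ed (hbs₁ x₁ List.mem_cons_self) h1
    cases bs₂ with
    | nil =>
      exfalso
      simp only [List.map_nil, List.flatten_nil, List.nil_append] at h2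
      obtain ⟨-, h2'⟩ := step_ed he₂ h2
      obtain ⟨hp, -⟩ := succ_syncI (succ_rotr h2')
      exact (succ_offI (succ_rotr h1')).1 hp
    | cons x₂ r₂ =>
      simp only [List.map_cons, List.flatten_cons, List.cons_append, List.append_assoc] at h2
      obtain ⟨hc2, h2'⟩ := step_ed (hbs₂ x₂ List.mem_cons_self) h2
      obtain ⟨-, h1''⟩ := succ_offI (succ_rotr h1')
      obtain ⟨-, h2''⟩ := succ_offI (succ_rotr h2')
      obtain ⟨hr, he⟩ := ih e₁ r₂ e₂ _ _
        (fun x hx => hbs₁ x (List.mem_cons_of_mem _ hx))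
        he₁ (fun x hx => hbs₂ x (List.mem_cons_of_mem _ hx)) he₂ h1'' h2''
      exact ⟨by rw [hr, hc1, hc2], he⟩

lemma valid_repr {R : Set (Fin 3 × Fin n)} (hR : ValidConf n R) :
    ∃ p b, R = conf n p b := by
  classical
  obtain ⟨⟨p, hp, hup⟩, hc⟩ := hR
  refine ⟨p, fun i => decide (cCell n i ∈ R), ?_⟩
  ext ⟨t, j⟩
  simp only [mem_conf, decide_eq_true_eq, decide_eq_false_iff_not]
  constructor
  · intro hmem
    fin_cases t
    · exact Or.inl ⟨rfl, hup j hmem⟩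
    · exact Or.inr (Or.inl ⟨rfl, hmem⟩)
    · exact Or.inr (Or.inr ⟨rfl, fun hcc => (hc j).mp hcc hmem⟩)
  · rintro (⟨ht, hj⟩ | ⟨ht, hj⟩ | ⟨ht, hj⟩)
    · fin_cases t
      · rw [show j = p from hj]; exact hp
      · exact absurd ht (by simp)
      · exact absurd ht (by simp)
    · fin_cases t
      · exact absurd ht (by simp)
      · exact hj
      · exact absurd ht (by simp)
    · fin_cases t
      · exact absurd ht (by simp)
      · exact absurd ht (by simp)
      · exact not_not.mp (fun hnot => hj ((hc j).mpr hnot))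

variable (n)

/-- The languages `L_reset`, `L_inc` and `L_dec` of an `n`-bit
binary counter are deterministic on every valid configuration `R`: any two words
of the language which preserve the cardinality of `R` are equal. -/
theorem counter_languages_deterministic
    (R : Set (Fin 3 × Fin n)) (hR : ValidConf n R) :
    (∀ u₁ u₂ : List (PTrans (Fin 3 × Fin n)), memLreset n u₁ → memLreset n u₂ →
      (wordApply R u₁).ncard = R.ncard → (wordApply R u₂).ncard = R.ncard → u₁ = u₂) ∧
    (∀ u₁ u₂ : List (PTrans (Fin 3 × Fin n)), memLinc n u₁ → memLinc n u₂ →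
      (wordApply R u₁).ncard = R.ncard → (wordApply R u₂).ncard = R.ncard → u₁ = u₂) ∧
    (∀ u₁ u₂ : List (PTrans (Fin 3 × Fin n)), memLdec n u₁ → memLdec n u₂ →
      (wordApply R u₁).ncard = R.ncard → (wordApply R u₂).ncard = R.ncard → u₁ = u₂) := by
  obtain ⟨p, b, rfl⟩ := valid_repr hR
  refine ⟨?_, ?_, ?_⟩
  · rintro u₁ u₂ ⟨bs₁, e₁, hbs₁, he₁, rfl⟩ ⟨bs₂, e₂, hbs₂, he₂, rfl⟩ h1 h2
    rw [conf_ncard] at h1 h2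
    obtain ⟨hp, h1'⟩ := succ_syncI h1
    subst hp
    obtain ⟨-, h2'⟩ := succ_syncI h2
    obtain ⟨hbs, he⟩ := reset_unique bs₁ e₁ bs₂ e₂ 0 b hbs₁ he₁ hbs₂ he₂ h1' h2'
    rw [hbs, he]
  · rintro u₁ u₂ ⟨k₁, m₁, rfl⟩ ⟨k₂, m₂, rfl⟩ h1 h2
    rw [conf_ncard] at h1 h2
    obtain ⟨hp, h1'⟩ := succ_syncI h1
    subst hp
    obtain ⟨-, h2'⟩ := succ_syncI h2
    obtain ⟨hk, hm⟩ := incTail_unique k₁ m₁ k₂ m₂ 0 b h1' h2'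
    rw [hk, hm]
  · rintro u₁ u₂ ⟨k₁, m₁, rfl⟩ ⟨k₂, m₂, rfl⟩ h1 h2
    rw [conf_ncard] at h1 h2
    obtain ⟨hp, h1'⟩ := succ_syncI h1
    subst hp
    obtain ⟨-, h2'⟩ := succ_syncI h2
    obtain ⟨hk, hm⟩ := decTail_unique k₁ m₁ k₂ m₂ 0 b h1' h2'
    rw [hk, hm]
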